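/- Let F be a field of characteristic zero, let k ≥ 2 be an integer, and let A ∈ Mₙ(F) be nilpotent. If B ∈ Mₙ(F) satisfies Ker Ad_A^k = Ann_k(B), then B is a scalar matrix. -/

import Mathlib

open Matrix

/-- The adjoint map `Ad_A : X ↦ AX - XA`. -/
def adFun {n : ℕ} {F : Type*} [Field F] (A : Matrix (Fin n) (Fin n) F) :
    Matrix (Fin n) (Fin n) F → Matrix (Fin n) (Fin n) F :=
  fun X => A * X - X * A

/-- The kernel of the `k`-fold composition of `Ad_A`. -/
def kerAdPow {n : ℕ} {F : Type*} [Field F] (A : Matrix (Fin n) (Fin n) F) (k : ℕ) :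
    Set (Matrix (Fin n) (Fin n) F) :=
  {X | (adFun A)^[k] X = 0}

/-- The `k`-th annihilator of `B`: all `X` with `Ad_X^k (B) = 0`. -/
def annPow {n : ℕ} {F : Type*} [Field F] (B : Matrix (Fin n) (Fin n) F) (k : ℕ) :
    Set (Matrix (Fin n) (Fin n) F) :=
  {X | (adFun X)^[k] B = 0}

section Helpers

variable {n : ℕ} {F : Type*} [Field F]

private lemma vv_mul (u v : Fin n → F) (M : Matrix (Fin n) (Fin n) F) :
    vecMulVec u v * M = vecMulVec u (vecMul v M) := by
  ext i j
  simp only [vecMulVec_apply, mul_apply, vecMul, dotProduct]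
  rw [Finset.mul_sum]
  apply Finset.sum_congr rfl; intros; ring

private lemma mul_vv (M : Matrix (Fin n) (Fin n) F) (u v : Fin n → F) :
    M * vecMulVec u v = vecMulVec (M.mulVec u) v := by
  ext i j
  simp only [vecMulVec_apply, mul_apply, mulVec, dotProduct]
  rw [Finset.sum_mul]
  apply Finset.sum_congr rfl; intros; ring

private lemma vv_mul_vv (u v u' v' : Fin n → F) :
    vecMulVec u v * vecMulVec u' v' = (v ⬝ᵥ u') • vecMulVec u v' := by
  ext i j
  simp only [vecMulVec_apply, mul_apply, dotProduct, Matrix.smul_apply, smul_eq_mul]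
  rw [Finset.sum_mul]
  apply Finset.sum_congr rfl; intros; ring

private lemma vv_mulVec (u v w : Fin n → F) :
    (vecMulVec u v).mulVec w = (v ⬝ᵥ w) • u := by
  ext i
  simp only [vecMulVec_apply, mulVec, dotProduct, Pi.smul_apply, smul_eq_mul,
    Finset.sum_mul]
  apply Finset.sum_congr rfl; intros; ring

private lemma idem_step {P C : Matrix (Fin n) (Fin n) F} (hP : P*P = P)
    (h : adFun P (adFun P C) = 0) : adFun P C = 0 := by
  have hP2 : ∀ X : Matrix (Fin n) (Fin n) F, X*P*P = X*P := fun X => by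
    rw [mul_assoc, hP]
  simp only [adFun, mul_sub, sub_mul, ← mul_assoc, hP, hP2] at h ⊢
  have hL := congrArg (fun Z => P * Z) h
  have hR := congrArg (fun Z => Z * P) h
  simp only [mul_sub, sub_mul, ← mul_assoc, hP, hP2, mul_zero, zero_mul, sub_self, sub_zero,
    zero_sub, neg_eq_zero] at hL hR
  rw [sub_eq_zero] at hL hR
  rw [sub_eq_zero, hL, hR]

private lemma idem_comm {P B : Matrix (Fin n) (Fin n) F} (hP : P*P = P) {k : ℕ} (hk : 1 ≤ k)
    (h : (adFun P)^[k] B = 0) : P*B = B*P := by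
  obtain ⟨m, rfl⟩ : ∃ m, k = m + 1 := ⟨k-1, by omega⟩
  rw [← sub_eq_zero]
  have hgoal : adFun P B = 0 → P*B - B*P = 0 := fun hh => by simpa [adFun] using hh
  apply hgoal
  clear hgoal hk
  induction m with
  | zero => simpa using h
  | succ m ih =>
      apply ih
      rw [Function.iterate_succ_apply']
      apply idem_step hP
      have h' := h
      rw [Function.iterate_succ_apply', Function.iterate_succ_apply'] at h'
      exact h'

private lemma sq_zero_ad3 {X B : Matrix (Fin n) (Fin n) F} (hX : X*X = 0) :
    (adFun X)^[3] B = 0 := by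
  have hXr : ∀ M : Matrix (Fin n) (Fin n) F, M*X*X = 0 := fun M => by
    rw [mul_assoc, hX, mul_zero]
  simp only [Function.iterate_succ, Function.iterate_zero, Function.comp_apply, id_eq]
  simp [adFun, mul_sub, sub_mul, ← mul_assoc, hX, hXr]

private lemma adFun_iter_zero (A : Matrix (Fin n) (Fin n) F) (k : ℕ) :
    (adFun A)^[k] 0 = 0 := by
  induction k with
  | zero => rfl
  | succ k ih => rw [Function.iterate_succ_apply, show adFun A 0 = 0 by simp [adFun]]; exact ih

private lemma sq_zero_ann {X B : Matrix (Fin n) (Fin n) F} (hX : X*X = 0) {k : ℕ} (hk : 3 ≤ k) :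
    (adFun X)^[k] B = 0 := by
  obtain ⟨m, rfl⟩ : ∃ m, k = m + 3 := ⟨k-3, by omega⟩
  rw [Function.iterate_add_apply, sq_zero_ad3 hX, adFun_iter_zero]

private lemma sq_zero_ann2 {X B : Matrix (Fin n) (Fin n) F} (hX : X*X = 0) (hB : X*B*X = 0) :
    (adFun X)^[2] B = 0 := by
  have hXr : ∀ M : Matrix (Fin n) (Fin n) F, M*X*X = 0 := fun M => by
    rw [mul_assoc, hX, mul_zero]
  simp only [Function.iterate_succ, Function.iterate_zero, Function.comp_apply, id_eq]
  simp [adFun, mul_sub, sub_mul, ← mul_assoc, hX, hXr, hB]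

private lemma dual_sep {a b x : Fin n → F} (hx : x ∉ Submodule.span F {a, b}) :
    ∃ v : Fin n → F, v ⬝ᵥ a = 0 ∧ v ⬝ᵥ b = 0 ∧ v ⬝ᵥ x ≠ 0 := by
  obtain ⟨f, hfx, hf⟩ := Submodule.exists_dual_map_eq_bot_of_notMem hx inferInstance
  have key : ∀ y : Fin n → F,
      (fun i => f (fun j => if i = j then (1:F) else 0)) ⬝ᵥ y = f y := by
    intro y
    conv_rhs => rw [pi_eq_sum_univ y]
    rw [map_sum, dotProduct]
    exact Finset.sum_congr rfl fun i _ => by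
      rw [_root_.map_smul, smul_eq_mul, mul_comm]
  have hker : ∀ y ∈ Submodule.span F ({a, b} : Set (Fin n → F)), f y = 0 := by
    intro y hy
    have hmem : f y ∈ Submodule.map f (Submodule.span F ({a, b} : Set (Fin n → F))) :=
      Submodule.mem_map_of_mem hy
    rw [hf] at hmem
    simpa using hmem
  refine ⟨fun i => f (fun j => if i = j then (1:F) else 0), ?_, ?_, ?_⟩
  · rw [key]; exact hker a (Submodule.subset_span (by simp))
  · rw [key]; exact hker b (Submodule.subset_span (by simp))
  · rw [key]; exact hfx

private lemma scalar_of_eigenvec {m : ℕ} {B : Matrix (Fin (m+1)) (Fin (m+1)) F}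
    (h : ∀ u : Fin (m+1) → F, u ≠ 0 → ∃ c : F, B.mulVec u = c • u) :
    ∃ c : F, B = c • (1 : Matrix (Fin (m+1)) (Fin (m+1)) F) := by
  have hsingle : ∀ j : Fin (m+1), (Pi.single j 1 : Fin (m+1) → F) ≠ 0 := by
    intro j hj
    have := congrFun hj j
    simp at this
  have hcol : ∀ j, ∃ c : F, ∀ i, B i j = if i = j then c else 0 := by
    intro j
    obtain ⟨c, hc⟩ := h (Pi.single j 1) (hsingle j)
    refine ⟨c, fun i => ?_⟩
    have hthis := congrFun hc i
    simp only [mulVec_single_one, Matrix.col_apply, mul_one, Pi.smul_apply, Pi.single_apply, smul_eq_mul] at hthis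
    rw [hthis]
    by_cases hij : i = j <;> simp [hij]
  choose cc hcc using hcol
  have hdiag : ∀ i j, cc i = cc j := by
    intro i j
    by_cases hij : i = j
    · rw [hij]
    · have hu : (Pi.single i 1 + Pi.single j 1 : Fin (m+1) → F) ≠ 0 := by
        intro hz
        have := congrFun hz i
        simp [Pi.single_apply, hij] at this
      obtain ⟨c, hc⟩ := h _ hu
      rw [mulVec_add] at hc
      have hci := congrFun hc i
      have hcj := congrFun hc j
      simp [Pi.single_apply, hij, Ne.symm hij] at hci hcj
      have h1 : B i i + B i j = c := by simpa using hci
      have h2 : B j i + B j j = c := by simpa using hcj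
      rw [hcc i i, hcc j i] at h1
      rw [hcc i j, hcc j j] at h2
      simp [hij, Ne.symm hij] at h1 h2
      rw [h1, h2]
  refine ⟨cc 0, ?_⟩
  ext i j
  rw [hcc j i]
  by_cases hij : i = j
  · subst hij; simp [one_apply, hdiag i 0]
  · simp [one_apply, hij]

private lemma eig_of_idem_ann {B : Matrix (Fin n) (Fin n) F} {k : ℕ} (hk : 1 ≤ k)
    {u v : Fin n → F} (huv : v ⬝ᵥ u = 1)
    (hX : (adFun (vecMulVec u v))^[k] B = 0) :
    B.mulVec u = (v ⬝ᵥ B.mulVec u) • u := by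
  have hP : vecMulVec u v * vecMulVec u v = vecMulVec u v := by
    rw [vv_mul_vv, huv, one_smul]
  have hc := idem_comm hP hk hX
  have h1 : vecMulVec u v *ᵥ (B *ᵥ u) = B *ᵥ (vecMulVec u v *ᵥ u) := by
    rw [mulVec_mulVec, mulVec_mulVec, hc]
  rw [vv_mulVec, vv_mulVec, huv, one_smul] at h1
  exact h1.symm

private lemma adIter_add (A : Matrix (Fin n) (Fin n) F) (k : ℕ)
    (X Y : Matrix (Fin n) (Fin n) F) :
    (adFun A)^[k] (X + Y) = (adFun A)^[k] X + (adFun A)^[k] Y := by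
  induction k generalizing X Y with
  | zero => rfl
  | succ k ih =>
      rw [Function.iterate_succ_apply, Function.iterate_succ_apply,
        Function.iterate_succ_apply]
      rw [show adFun A (X + Y) = adFun A X + adFun A Y by simp [adFun]; noncomm_ring]
      exact ih _ _

private lemma adIter_smul (A : Matrix (Fin n) (Fin n) F) (k : ℕ) (c : F)
    (X : Matrix (Fin n) (Fin n) F) :
    (adFun A)^[k] (c • X) = c • (adFun A)^[k] X := by
  induction k generalizing X with
  | zero => rfl
  | succ k ih =>
      rw [Function.iterate_succ_apply, Function.iterate_succ_apply]
      rw [show adFun A (c • X) = c • adFun A X by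
        simp [adFun, Matrix.mul_smul, Matrix.smul_mul, smul_sub]]
      exact ih _

/-- `kerAdPow` as a submodule. -/
private def KSub (A : Matrix (Fin n) (Fin n) F) (k : ℕ) :
    Submodule F (Matrix (Fin n) (Fin n) F) where
  carrier := {X | (adFun A)^[k] X = 0}
  add_mem' := by
    intro X Y hX hY
    simp only [Set.mem_setOf_eq] at *
    rw [adIter_add, hX, hY, add_zero]
  zero_mem' := adFun_iter_zero A k
  smul_mem' := by
    intro c X hX
    simp only [Set.mem_setOf_eq] at *
    rw [adIter_smul, hX, smul_zero]

private lemma mem_KSub_iff (A : Matrix (Fin n) (Fin n) F) (k : ℕ)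
    (X : Matrix (Fin n) (Fin n) F) : X ∈ KSub A k ↔ (adFun A)^[k] X = 0 := Iff.rfl

private lemma one_mem_K (A : Matrix (Fin n) (Fin n) F) {k : ℕ} (hk : 1 ≤ k) :
    (adFun A)^[k] (1 : Matrix (Fin n) (Fin n) F) = 0 := by
  obtain ⟨m, rfl⟩ : ∃ m, k = m + 1 := ⟨k - 1, by omega⟩
  rw [Function.iterate_succ_apply, show adFun A 1 = 0 by simp [adFun], adFun_iter_zero]

private lemma Eii_sub_Ejj (i j : Fin n) :
    vecMulVec (Pi.single i (1:F)) (Pi.single i 1) -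
      vecMulVec (Pi.single j (1:F)) (Pi.single j 1) =
    vecMulVec (Pi.single i 1 + Pi.single j 1) (Pi.single i 1 - Pi.single j 1)
      + vecMulVec (Pi.single i 1) (Pi.single j 1)
      - vecMulVec (Pi.single j 1) (Pi.single i 1) := by
  ext a b
  simp only [Matrix.sub_apply, Matrix.add_apply, vecMulVec_apply, Pi.add_apply, Pi.sub_apply]
  ring

private lemma diag_identity {m : ℕ} (i : Fin (m+1)) :
    ((m : F) + 1) • vecMulVec (Pi.single i (1:F)) (Pi.single i 1) =
      1 + ∑ j ∈ Finset.univ.erase i,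
        (vecMulVec (Pi.single i (1:F)) (Pi.single i 1) -
          vecMulVec (Pi.single j (1:F)) (Pi.single j 1)) := by
  ext a b
  simp only [Matrix.smul_apply, Matrix.add_apply, Matrix.sum_apply, Matrix.sub_apply,
    vecMulVec_apply, Pi.single_apply, smul_eq_mul, Matrix.one_apply]
  rw [Finset.sum_sub_distrib, Finset.sum_const, Finset.sum_erase_eq_sub (Finset.mem_univ i)]
  have hcard : (Finset.univ.erase i).card = m := by
    rw [Finset.card_erase_of_mem (Finset.mem_univ i), Finset.card_univ, Fintype.card_fin]
    omega
  rw [hcard]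
  have hsum : ∑ j : Fin (m+1), (if a = j then (1:F) else 0) * (if b = j then 1 else 0)
      = if a = b then 1 else 0 := by
    rw [Finset.sum_eq_single a]
    · by_cases hab : a = b <;> simp [hab]
      try (intro hc; exact absurd hc.symm hab)
    · intro c _ hc; simp [Ne.symm hc]
    · simp
  rw [hsum]
  by_cases hai : a = i <;> by_cases hbi : b = i <;> by_cases hab : a = b <;>
    simp [hai, hbi, hab] <;> push_cast <;> ring_nf <;> try simp_all

end Helpers

theorem isScalar_of_kerAdPow_eq_annPow_of_nilpotent {n : ℕ} {F : Type*} [Field F] [CharZero F]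
    (k : ℕ) (hk : 2 ≤ k) (A B : Matrix (Fin n) (Fin n) F) (hA : IsNilpotent A)
    (h : kerAdPow A k = annPow B k) :
    ∃ c : F, B = c • (1 : Matrix (Fin n) (Fin n) F) := by
  classical
  rcases n with _ | m
  · exact ⟨0, by ext i j; exact i.elim0⟩
  have hmem : ∀ X : Matrix (Fin (m+1)) (Fin (m+1)) F,
      (adFun A)^[k] X = 0 ↔ (adFun X)^[k] B = 0 := by
    intro X
    constructor
    · intro hX
      have hX' : X ∈ kerAdPow A k := hX
      rw [h] at hX'
      exact hX'
    · intro hX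
      have hX' : X ∈ annPow B k := hX
      rw [← h] at hX'
      exact hX'
  have hk1 : 1 ≤ k := by omega
  suffices hs : ∀ u : Fin (m+1) → F, u ≠ 0 → ∃ c : F, B *ᵥ u = c • u by
    exact scalar_of_eigenvec hs
  rcases eq_or_lt_of_le hk with rfl | hk3
  · -- ================= k = 2 =================
    -- Step A : A * A = 0
    have hAA : A * A = 0 := by
      by_contra hA2
      obtain ⟨u, hu⟩ : ∃ u, (A*A) *ᵥ u ≠ 0 := by
        by_contra h0
        push_neg at h0
        apply hA2
        ext a b
        have hb := congrFun (h0 (Pi.single b 1)) a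
        simpa using hb
      obtain ⟨N, hN⟩ := hA
      have hex : ∃ t, (A^t) *ᵥ u = 0 := ⟨N, by rw [hN, zero_mulVec]⟩
      set m' := Nat.find hex with hm'def
      have hm0 : (A^m') *ᵥ u = 0 := Nat.find_spec hex
      have hmlt : ∀ t < m', (A^t) *ᵥ u ≠ 0 := fun t ht => Nat.find_min hex ht
      have hm3 : 3 ≤ m' := by
        by_contra hm
        push_neg at hm
        apply hu
        have h2 : (A^2) *ᵥ u = 0 := by
          have hsplit : A^2 = A^(2-m') * A^(m') := by
            rw [← pow_add]
            congr 1
            omega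
          rw [hsplit, ← mulVec_mulVec, hm0, mulVec_zero]
        rwa [pow_two] at h2
      set j := m' - 1 with hjdef
      have hju : (A^j) *ᵥ u ≠ 0 := hmlt j (by omega)
      have hjsucc : (A^(j+1)) *ᵥ u = 0 := by
        rw [show j + 1 = m' by omega]
        exact hm0
      have hAu : A *ᵥ u ≠ 0 := by
        intro h0
        apply hu
        rw [← mulVec_mulVec, h0, mulVec_zero]
      have main : ∀ v : Fin (m+1) → F, v ⬝ᵥ u = 0 → v ⬝ᵥ (B *ᵥ u) = 0 →
          v ⬝ᵥ (A *ᵥ u) = 0 ∧ v ⬝ᵥ (A *ᵥ (A *ᵥ u)) = 0 := by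
        intro v hv1 hv2
        set X := vecMulVec u v with hXdef
        have hXX : X * X = 0 := by rw [hXdef, vv_mul_vv, hv1, zero_smul]
        have hXBX : X * B * X = 0 := by
          rw [hXdef, vv_mul, vv_mul_vv]
          have hz : (v ᵥ* B) ⬝ᵥ u = 0 := by
            rw [← dotProduct_mulVec]
            exact hv2
          rw [hz, zero_smul]
        have hXker : (adFun A)^[2] X = 0 := (hmem X).2 (sq_zero_ann2 hXX hXBX)
        have h0 : (A*(A*X - X*A) - (A*X - X*A)*A) *ᵥ u = 0 := by
          have h' := hXker
          rw [Function.iterate_succ_apply, Function.iterate_succ_apply,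
            Function.iterate_zero_apply] at h'
          have : A*(A*X - X*A) - (A*X - X*A)*A = 0 := h'
          rw [this, zero_mulVec]
        have hXu : X *ᵥ u = 0 := by rw [hXdef, vv_mulVec, hv1, zero_smul]
        set a := v ⬝ᵥ (A *ᵥ u) with hadef
        set b := v ⬝ᵥ (A *ᵥ (A *ᵥ u)) with hbdef
        have hXAu : X *ᵥ (A *ᵥ u) = a • u := by rw [hXdef, vv_mulVec]
        have hXAAu : X *ᵥ (A *ᵥ (A *ᵥ u)) = b • u := by rw [hXdef, vv_mulVec]
        have eInner : (A*X - X*A) *ᵥ u = -(a • u) := by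
          rw [sub_mulVec, ← mulVec_mulVec, ← mulVec_mulVec, hXu, mulVec_zero, hXAu, zero_sub]
        have e1 : (A*(A*X - X*A)) *ᵥ u = -(a • (A *ᵥ u)) := by
          rw [← mulVec_mulVec, eInner, mulVec_neg, mulVec_smul]
        have e2 : ((A*X - X*A)*A) *ᵥ u = a • (A *ᵥ u) - b • u := by
          have t1 : (A*X*A) *ᵥ u = a • (A *ᵥ u) := by
            rw [mul_assoc, ← mulVec_mulVec, ← mulVec_mulVec, hXAu, mulVec_smul]
          have t2 : (X*A*A) *ᵥ u = b • u := by
            rw [mul_assoc, ← mulVec_mulVec, ← mulVec_mulVec, hXAAu]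
          rw [sub_mul, sub_mulVec, t1, t2]
        rw [sub_mulVec, e1, e2] at h0
        have hEq : b • u = a • (A *ᵥ u) + a • (A *ᵥ u) := by
          have : b • u - (a • (A *ᵥ u) + a • (A *ᵥ u)) = 0 := by
            rw [← h0]; abel
          rwa [sub_eq_zero] at this
        have hb0 : b = 0 := by
          have happ := congrArg (fun x => (A^j) *ᵥ x) hEq
          simp only [mulVec_smul, mulVec_add] at happ
          rw [mulVec_mulVec, ← pow_succ, hjsucc, smul_zero, add_zero] at happ
          exact (smul_eq_zero.mp happ).resolve_right hju
        have ha0 : a = 0 := by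
          rw [hb0, zero_smul] at hEq
          have h2a : (a + a) • (A *ᵥ u) = 0 := by
            rw [add_smul]
            exact hEq.symm
          have haa : a + a = 0 := (smul_eq_zero.mp h2a).resolve_right hAu
          exact add_self_eq_zero.mp haa
        exact ⟨ha0, hb0⟩
      have hAuspan : A *ᵥ u ∈ Submodule.span F {u, B *ᵥ u} := by
        by_contra hns
        obtain ⟨v, hv1, hv2, hv3⟩ := dual_sep hns
        exact hv3 (main v hv1 hv2).1
      have hAAuspan : A *ᵥ (A *ᵥ u) ∈ Submodule.span F {u, B *ᵥ u} := by
        by_contra hns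
        obtain ⟨v, hv1, hv2, hv3⟩ := dual_sep hns
        exact hv3 (main v hv1 hv2).2
      rw [Submodule.mem_span_pair] at hAuspan hAAuspan
      obtain ⟨α, β, hαβ⟩ := hAuspan
      obtain ⟨γ, δ, hγδ⟩ := hAAuspan
      by_cases hβ : β = 0
      · rw [hβ, zero_smul, add_zero] at hαβ
        have h1 := congrArg (fun x => (A^j) *ᵥ x) hαβ
        simp only [mulVec_smul] at h1
        rw [mulVec_mulVec, ← pow_succ, hjsucc] at h1
        have hα : α = 0 := (smul_eq_zero.mp h1).resolve_right hju
        rw [hα, zero_smul] at hαβ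
        exact hAu hαβ.symm
      · have hBu : B *ᵥ u = β⁻¹ • (A *ᵥ u - α • u) := by
          have hstep : β • (B *ᵥ u) = A *ᵥ u - α • u := by
            rw [← hαβ]; abel
          rw [← hstep, inv_smul_smul₀ hβ]
        have hAAu : A *ᵥ (A *ᵥ u) = (γ - δ * β⁻¹ * α) • u + (δ * β⁻¹) • (A *ᵥ u) := by
          rw [← hγδ, hBu, smul_smul, smul_sub, smul_smul, sub_smul]
          abel
        set p := γ - δ * β⁻¹ * α
        set q := δ * β⁻¹
        have h1 := congrArg (fun x => (A^(j-1)) *ᵥ x) hAAu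
        simp only [mulVec_add, mulVec_smul] at h1
        have hLHS : (A^(j-1)) *ᵥ (A *ᵥ (A *ᵥ u)) = 0 := by
          rw [mulVec_mulVec, mulVec_mulVec, ← pow_succ, ← pow_succ,
            show j - 1 + 1 + 1 = j + 1 by omega, hjsucc]
        have hmid : (A^(j-1)) *ᵥ (A *ᵥ u) = (A^j) *ᵥ u := by
          rw [mulVec_mulVec, ← pow_succ, show j - 1 + 1 = j by omega]
        rw [hLHS, hmid] at h1
        -- h1 : 0 = p • (A^(j-1) *ᵥ u) + q • (A^j *ᵥ u)
        have h2 := congrArg (fun x => A *ᵥ x) h1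
        simp only [mulVec_zero, mulVec_add, mulVec_smul] at h2
        rw [mulVec_mulVec, mulVec_mulVec, ← pow_succ', ← pow_succ',
          show j - 1 + 1 = j by omega, hjsucc, smul_zero, add_zero] at h2
        have hp : p = 0 := (smul_eq_zero.mp h2.symm).resolve_right hju
        rw [hp, zero_smul, zero_add] at h1
        have hq : q = 0 := (smul_eq_zero.mp h1.symm).resolve_right hju
        rw [hp, hq, zero_smul, zero_smul, add_zero] at hAAu
        apply hu
        rw [← mulVec_mulVec]
        exact hAAu
    -- Step B : eigenvector property
    have hann : ∀ (u v : Fin (m+1) → F), v ⬝ᵥ u = 1 → (A *ᵥ u = 0 ∨ v ᵥ* A = 0) →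
        B *ᵥ u = (v ⬝ᵥ (B *ᵥ u)) • u := by
      intro u v hvu hor
      apply eig_of_idem_ann hk1 hvu
      apply (hmem _).1
      have hAXA : A * vecMulVec u v * A = 0 := by
        rw [mul_vv, vv_mul]
        rcases hor with h0 | h0
        · rw [h0]
          ext x y
          simp [vecMulVec_apply]
        · rw [h0]
          ext x y
          simp [vecMulVec_apply]
      have hAA2 : ∀ M : Matrix (Fin (m+1)) (Fin (m+1)) F, M*A*A = 0 := fun M => by
        rw [mul_assoc, hAA, mul_zero]
      rw [Function.iterate_succ_apply, Function.iterate_succ_apply,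
        Function.iterate_zero_apply]
      show A*(A*(vecMulVec u v) - (vecMulVec u v)*A) -
        (A*(vecMulVec u v) - (vecMulVec u v)*A)*A = 0
      simp [mul_sub, sub_mul, ← mul_assoc, hAA, hAXA, hAA2]
    have hdet : A.det = 0 := by
      have h2 : A.det * A.det = 0 := by
        rw [← det_mul, hAA, det_zero]
      exact mul_self_eq_zero.mp h2
    obtain ⟨v0, hv00, hv0A⟩ := (Matrix.exists_vecMul_eq_zero_iff.mpr hdet)
    have eigA : ∀ x : Fin (m+1) → F, (∃ w, w ᵥ* A = 0 ∧ w ⬝ᵥ x ≠ 0) →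
        ∃ c : F, B *ᵥ x = c • x := by
      rintro x ⟨w, hwA, hwx⟩
      refine ⟨_, hann x ((w ⬝ᵥ x)⁻¹ • w) ?_ (Or.inr ?_)⟩
      · rw [smul_dotProduct, smul_eq_mul, inv_mul_cancel₀ hwx]
      · rw [smul_vecMul, hwA, smul_zero]
    intro u hu
    by_cases hc2 : A *ᵥ u = 0
    · obtain ⟨i, hi⟩ : ∃ i, u i ≠ 0 := by
        by_contra h0
        push_neg at h0
        exact hu (funext fun i => h0 i)
      refine ⟨_, hann u ((u i)⁻¹ • (Pi.single i 1 : Fin (m+1) → F)) ?_ (Or.inl hc2)⟩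
      rw [smul_dotProduct, smul_eq_mul, single_dotProduct, one_mul, inv_mul_cancel₀ hi]
    by_cases hc1 : ∃ w, w ᵥ* A = 0 ∧ w ⬝ᵥ u ≠ 0
    · exact eigA u hc1
    push_neg at hc1
    obtain ⟨i, hi⟩ : ∃ i, v0 i ≠ 0 := by
      by_contra h0
      push_neg at h0
      exact hv00 (funext fun i => h0 i)
    set w : Fin (m+1) → F := Pi.single i 1 with hwdef
    have hv0w : v0 ⬝ᵥ w ≠ 0 := by
      rw [hwdef, dotProduct_single, mul_one]
      exact hi
    have hv0u : v0 ⬝ᵥ u = 0 := hc1 v0 hv0A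
    obtain ⟨cw, hcw⟩ := eigA w ⟨v0, hv0A, hv0w⟩
    obtain ⟨c1, hc1'⟩ := eigA (u + w) ⟨v0, hv0A, by
      rw [dotProduct_add, hv0u, zero_add]; exact hv0w⟩
    obtain ⟨c2, hc2'⟩ := eigA (u - w) ⟨v0, hv0A, by
      rw [dotProduct_sub, hv0u, zero_sub]; exact neg_ne_zero.mpr hv0w⟩
    rw [mulVec_add] at hc1'
    rw [mulVec_sub] at hc2'
    have hkey : (c1 - c2) • u + (c1 + c2 - 2*cw) • w = 0 := by
      have hdiff : (B *ᵥ u + B *ᵥ w) - (B *ᵥ u - B *ᵥ w) = c1 • (u + w) - c2 • (u - w) := by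
        rw [hc1', hc2']
      rw [hcw] at hdiff
      have hL : (B *ᵥ u + cw • w) - (B *ᵥ u - cw • w) = cw • w + cw • w := by abel
      rw [hL] at hdiff
      rw [smul_add, smul_sub] at hdiff
      have : (c1 - c2) • u + (c1 + c2 - 2*cw) • w
          = (c1 • u + c1 • w - (c2 • u - c2 • w)) - (cw • w + cw • w) := by
        rw [sub_smul, sub_smul, add_smul]
        rw [show (2:F)*cw = cw + cw by ring, add_smul]
        abel
      rw [this, ← hdiff]
      abel
    have h20 : (c1 + c2 - 2*cw) * (v0 ⬝ᵥ w) = 0 := by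
      have happ := congrArg (fun x => v0 ⬝ᵥ x) hkey
      simpa [dotProduct_add, dotProduct_smul, hv0u, smul_eq_mul] using happ
    have hsum : c1 + c2 - 2*cw = 0 := by
      rcases mul_eq_zero.mp h20 with h' | h'
      · exact h'
      · exact absurd h' hv0w
    rw [hsum, zero_smul, add_zero] at hkey
    have hc12 : c1 = c2 := by
      have hz := (smul_eq_zero.mp hkey).resolve_right hu
      exact sub_eq_zero.mp hz
    rw [← hc12] at hsum
    have hccw : c1 = cw := by
      have h2' : (2:F) * c1 = 2 * cw := by
        have : c1 + c1 - 2*cw = 0 := hsum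
        ring_nf
        ring_nf at this
        linear_combination this
      exact mul_left_cancel₀ (two_ne_zero) h2'
    refine ⟨c1, ?_⟩
    rw [smul_add] at hc1'
    rw [hcw, ← hccw] at hc1'
    exact add_right_cancel hc1'
  · -- ================= k ≥ 3 =================
    have hk3' : 3 ≤ k := hk3
    have hEij : ∀ i j : Fin (m+1), i ≠ j →
        vecMulVec (Pi.single i (1:F)) (Pi.single j 1) ∈ KSub A k := by
      intro i j hij
      rw [mem_KSub_iff]
      apply (hmem _).2
      apply sq_zero_ann _ hk3'
      have hz : (Pi.single j (1:F)) ⬝ᵥ (Pi.single i (1:F)) = 0 := by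
        simp [single_dotProduct, Pi.single_apply, Ne.symm hij]
      rw [vv_mul_vv, hz, zero_smul]
    have hN : ∀ i j : Fin (m+1), i ≠ j →
        vecMulVec (Pi.single i (1:F) + Pi.single j 1)
          (Pi.single i 1 - Pi.single j 1) ∈ KSub A k := by
      intro i j hij
      rw [mem_KSub_iff]
      apply (hmem _).2
      apply sq_zero_ann _ hk3'
      have hz : ((Pi.single i 1 : Fin (m+1) → F) - (Pi.single j 1 : Fin (m+1) → F)) ⬝ᵥ
          ((Pi.single i 1 : Fin (m+1) → F) + (Pi.single j 1 : Fin (m+1) → F)) = 0 := by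
        simp [sub_dotProduct, dotProduct_add, single_dotProduct, Pi.single_apply,
          hij, Ne.symm hij]
      rw [vv_mul_vv, hz, zero_smul]
    have hD : ∀ i j : Fin (m+1), i ≠ j →
        (vecMulVec (Pi.single i (1:F)) (Pi.single i 1) -
          vecMulVec (Pi.single j (1:F)) (Pi.single j 1)) ∈ KSub A k := by
      intro i j hij
      rw [Eii_sub_Ejj i j]
      exact Submodule.sub_mem _ (Submodule.add_mem _ (hN i j hij) (hEij i j hij))
        (hEij j i hij.symm)
    have hone : (1 : Matrix (Fin (m+1)) (Fin (m+1)) F) ∈ KSub A k := one_mem_K A hk1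
    have hEii : ∀ i : Fin (m+1),
        vecMulVec (Pi.single i (1:F)) (Pi.single i 1) ∈ KSub A k := by
      intro i
      have hnz : ((m:F) + 1) ≠ 0 := Nat.cast_add_one_ne_zero m
      have hmem2 : ((m:F)+1) • vecMulVec (Pi.single i (1:F)) (Pi.single i 1) ∈ KSub A k := by
        rw [diag_identity i]
        exact Submodule.add_mem _ hone (Submodule.sum_mem _ (fun j hj =>
          hD i j (Ne.symm (Finset.ne_of_mem_erase hj))))
      have hsm := Submodule.smul_mem (KSub A k) ((m:F)+1)⁻¹ hmem2
      rwa [inv_smul_smul₀ hnz] at hsm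
    have hK : ∀ X : Matrix (Fin (m+1)) (Fin (m+1)) F, (adFun A)^[k] X = 0 := by
      intro X
      rw [← mem_KSub_iff A k X]
      rw [matrix_eq_sum_single X]
      apply Submodule.sum_mem
      intro i _
      apply Submodule.sum_mem
      intro j _
      have hstd : Matrix.single i j (X i j)
          = (X i j) • vecMulVec (Pi.single i (1:F)) (Pi.single j 1) := by
        ext a b
        simp only [Matrix.single, Matrix.of_apply, Matrix.smul_apply, vecMulVec_apply,
          Pi.single_apply, smul_eq_mul]
        by_cases hai : i = a <;> by_cases hbj : j = b <;>
          simp [hai, hbj, eq_comm] <;> tauto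
      rw [hstd]
      by_cases hij : i = j
      · subst hij
        exact Submodule.smul_mem _ _ (hEii i)
      · exact Submodule.smul_mem _ _ (hEij i j hij)
    intro u hu
    obtain ⟨i, hi⟩ : ∃ i, u i ≠ 0 := by
      by_contra h0
      push_neg at h0
      exact hu (funext fun i => h0 i)
    have hvu : ((u i)⁻¹ • (Pi.single i 1 : Fin (m+1) → F)) ⬝ᵥ u = 1 := by
      rw [smul_dotProduct, smul_eq_mul, single_dotProduct, one_mul, inv_mul_cancel₀ hi]
    exact ⟨_, eig_of_idem_ann hk1 hvu ((hmem _).1 (hK _))⟩
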